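/- Let G=(M,E) be a finite tree with |M| ≥ 2 and nonnegative edge weights w, and let A ⊆ M with |A| ≥ 2. Suppose R : M → ℝ is A-feasible. Then for every edge e ∈ E such that each of the two connected components of the graph obtained from G by deleting e contains a vertex of A, one has Σ_{j∈M} R_j ≥ Σ_{e'∈E} w_{e'} − w_e. -/

import Mathlib

open scoped Classical

/-- Let `G = (M, E)` be a finite tree with `|M| ≥ 2` and nonnegative edge
weights `w`, and let `A ⊆ M` with `|A| ≥ 2`.  Suppose `R : M → ℝ` is `A`-feasible, i.e. `R` is
nonnegative and for every proper subset `B ⊊ M` with `A ⊄ B` the sum of `R` over `B` is at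
least the total weight of the edges inside `B`.  Then for every edge `e = {i, j} ∈ E` such
that each of the two connected components of `G` with `e` deleted contains a vertex of `A`,
one has `∑_{j ∈ M} R j ≥ ∑_{e' ∈ E} w e' − w e`. -/
private lemma stmt4_cover_aux {V : Type*} {G : SimpleGraph V} {v i : V}
    (p : G.Walk v i) (j : V) :
    (G.deleteEdges {s(i, j)}).Reachable i v ∨ (G.deleteEdges {s(i, j)}).Reachable j v := by
  induction p with
  | nil => exact Or.inl (SimpleGraph.Reachable.refl _)
  | @cons u x y h q ih =>
    by_cases he : s(u, x) = s(y, j)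
    · rw [Sym2.eq_iff] at he
      rcases he with ⟨rfl, rfl⟩ | ⟨rfl, rfl⟩
      · exact Or.inl (SimpleGraph.Reachable.refl _)
      · exact Or.inr (SimpleGraph.Reachable.refl _)
    · have hadj : (G.deleteEdges {s(y, j)}).Adj u x := by
        rw [SimpleGraph.deleteEdges_adj]
        exact ⟨h, by simpa using he⟩
      rcases ih with hr | hr
      · exact Or.inl (hr.trans hadj.symm.reachable)
      · exact Or.inr (hr.trans hadj.symm.reachable)

theorem stmt_4 {V : Type*} [Fintype V] (G : SimpleGraph V) (hT : G.IsTree)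
    (hcard : 2 ≤ Fintype.card V)
    (w : Sym2 V → ℝ) (hw : ∀ e ∈ G.edgeFinset, 0 ≤ w e)
    (A : Finset V) (hA : 2 ≤ A.card)
    (R : V → ℝ) (hR0 : ∀ j, 0 ≤ R j)
    (hfeas : ∀ B : Finset V, B ⊂ Finset.univ → ¬ A ⊆ B →
      ∑ e ∈ G.edgeFinset.filter (fun e => ∀ v ∈ e, v ∈ B), w e ≤ ∑ j ∈ B, R j)
    (i j : V) (hij : G.Adj i j)
    (hi : ∃ a ∈ A, (G.deleteEdges {s(i, j)}).Reachable i a)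
    (hj : ∃ a ∈ A, (G.deleteEdges {s(i, j)}).Reachable j a) :
    (∑ e ∈ G.edgeFinset, w e) - w s(i, j) ≤ ∑ v, R v := by
  classical
  set G' := G.deleteEdges {s(i, j)} with hG'
  -- the edge is a bridge, so i and j are not G'-reachable
  have hbridge : ¬ G'.Reachable i j := by
    have hac := hT.IsAcyclic
    rw [SimpleGraph.isAcyclic_iff_forall_adj_isBridge] at hac
    exact hac hij
  -- every vertex is G'-reachable from i or from j
  have hcover : ∀ v : V, G'.Reachable i v ∨ G'.Reachable j v := by
    intro v
    obtain ⟨p⟩ := hT.isConnected.preconnected v i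
    exact stmt4_cover_aux p j
  set B₁ : Finset V := Finset.univ.filter (fun v => G'.Reachable i v) with hB₁
  set B₂ : Finset V := Finset.univ.filter (fun v => G'.Reachable j v) with hB₂
  have hmem₁ : ∀ v, v ∈ B₁ ↔ G'.Reachable i v := by intro v; simp [hB₁]
  have hmem₂ : ∀ v, v ∈ B₂ ↔ G'.Reachable j v := by intro v; simp [hB₂]
  have hdisj : ∀ v, v ∈ B₁ → v ∉ B₂ := by
    intro v h1 h2
    exact hbridge (((hmem₁ v).1 h1).trans ((hmem₂ v).1 h2).symm)
  have hiB : i ∈ B₁ := (hmem₁ i).2 (SimpleGraph.Reachable.refl _)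
  have hjB : j ∈ B₂ := (hmem₂ j).2 (SimpleGraph.Reachable.refl _)
  -- B₂ is the complement of B₁
  have hcompl : B₂ = B₁ᶜ := by
    ext v
    simp only [Finset.mem_compl]
    constructor
    · intro h2 h1; exact hdisj v h1 h2
    · intro h1
      rcases hcover v with h | h
      · exact absurd ((hmem₁ v).2 h) h1
      · exact (hmem₂ v).2 h
  -- both are proper and miss a point of A
  have hprop₁ : B₁ ⊂ Finset.univ := by
    refine Finset.ssubset_univ_iff.2 ?_
    intro h; exact hdisj j (h ▸ Finset.mem_univ j) hjB
  have hprop₂ : B₂ ⊂ Finset.univ := by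
    refine Finset.ssubset_univ_iff.2 ?_
    intro h
    exact hdisj i hiB (h ▸ Finset.mem_univ i)
  obtain ⟨a₁, ha₁A, ha₁⟩ := hi
  obtain ⟨a₂, ha₂A, ha₂⟩ := hj
  have hnA₁ : ¬ A ⊆ B₁ := by
    intro h
    exact hdisj a₂ (h ha₂A) ((hmem₂ a₂).2 ha₂)
  have hnA₂ : ¬ A ⊆ B₂ := by
    intro h
    exact hdisj a₁ ((hmem₁ a₁).2 ha₁) (h ha₁A)
  have hf₁ := hfeas B₁ hprop₁ hnA₁
  have hf₂ := hfeas B₂ hprop₂ hnA₂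
  -- sum of R over B₁ and B₂ is the total sum
  have hRsum : ∑ x ∈ B₁, R x + ∑ x ∈ B₂, R x = ∑ v, R v := by
    rw [hcompl]
    exact Finset.sum_add_sum_compl B₁ R
  -- edges split
  have hedge : ∀ e ∈ G.edgeFinset, e ≠ s(i, j) →
      ((∀ v ∈ e, v ∈ B₁) ∨ (∀ v ∈ e, v ∈ B₂)) := by
    intro e he hne
    induction e with
    | h a b =>
      have hab : G.Adj a b := SimpleGraph.mem_edgeFinset.1 he
      have : G'.Adj a b := by
        rw [hG', SimpleGraph.deleteEdges_adj]
        exact ⟨hab, by simpa using hne⟩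
      rcases hcover a with h | h
      · left
        intro v hv
        rcases Sym2.mem_iff.1 hv with rfl | rfl
        · exact (hmem₁ v).2 h
        · exact (hmem₁ v).2 (h.trans this.reachable)
      · right
        intro v hv
        rcases Sym2.mem_iff.1 hv with rfl | rfl
        · exact (hmem₂ v).2 h
        · exact (hmem₂ v).2 (h.trans this.reachable)
  have hijE : s(i, j) ∈ G.edgeFinset := SimpleGraph.mem_edgeFinset.2 hij
  -- the two filters are disjoint and their union is edgeFinset \ {s(i,j)}
  have key : ∑ e ∈ G.edgeFinset, w e - w s(i, j)
      ≤ ∑ e ∈ G.edgeFinset.filter (fun e => ∀ v ∈ e, v ∈ B₁), w e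
        + ∑ e ∈ G.edgeFinset.filter (fun e => ∀ v ∈ e, v ∈ B₂), w e := by
    have hsub : G.edgeFinset.erase s(i, j) ⊆
        G.edgeFinset.filter (fun e => ∀ v ∈ e, v ∈ B₁) ∪
        G.edgeFinset.filter (fun e => ∀ v ∈ e, v ∈ B₂) := by
      intro e he
      obtain ⟨hne, heE⟩ := Finset.mem_erase.1 he
      rcases hedge e heE hne with h | h
      · exact Finset.mem_union_left _ (Finset.mem_filter.2 ⟨heE, h⟩)
      · exact Finset.mem_union_right _ (Finset.mem_filter.2 ⟨heE, h⟩)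
    have hdisjf : Disjoint (G.edgeFinset.filter (fun e => ∀ v ∈ e, v ∈ B₁))
        (G.edgeFinset.filter (fun e => ∀ v ∈ e, v ∈ B₂)) := by
      rw [Finset.disjoint_left]
      intro e h1 h2
      obtain ⟨heE, hv1⟩ := Finset.mem_filter.1 h1
      obtain ⟨_, hv2⟩ := Finset.mem_filter.1 h2
      induction e with
      | h a b =>
        exact hdisj a (hv1 a (Sym2.mem_mk_left a b)) (hv2 a (Sym2.mem_mk_left a b))
    have h1 : ∑ e ∈ G.edgeFinset, w e - w s(i, j) = ∑ e ∈ G.edgeFinset.erase s(i, j), w e := by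
      rw [Finset.sum_erase_eq_sub hijE]
    rw [h1, ← Finset.sum_union hdisjf]
    refine Finset.sum_le_sum_of_subset_of_nonneg hsub ?_
    intro e he _
    rcases Finset.mem_union.1 he with h | h
    · exact hw e (Finset.mem_filter.1 h).1
    · exact hw e (Finset.mem_filter.1 h).1
  calc ∑ e ∈ G.edgeFinset, w e - w s(i, j)
      ≤ ∑ e ∈ G.edgeFinset.filter (fun e => ∀ v ∈ e, v ∈ B₁), w e
        + ∑ e ∈ G.edgeFinset.filter (fun e => ∀ v ∈ e, v ∈ B₂), w e := key
    _ ≤ ∑ x ∈ B₁, R x + ∑ x ∈ B₂, R x := add_le_add hf₁ hf₂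
    _ = ∑ v, R v := hRsum
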